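/- On the light-like cone, the square of the discrete Lagrangian L(q,Q) = ⟨q, JQ⟩ is an integral of the Heisenberg model: if ⟨q_{k-1},q_{k-1}⟩ = ⟨q_k,q_k⟩ = 0 and q_{k+1} = λ_k J^{-1}q_k − q_{k-1} with λ_k as above, then ⟨q_k, J q_{k+1}⟩² = ⟨q_{k-1}, J q_k⟩². -/

import Mathlib

open Finset

theorem stmt3 (n : ℕ) (τ J : Fin n → ℝ)
    (hτ : ∀ i, τ i = 1 ∨ τ i = -1) (hJ : ∀ i, J i ≠ 0)
    (qm q qp : Fin n → ℝ) (lam : ℝ)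
    (hden : ∑ i, τ i * ((J i)⁻¹)^2 * q i * q i ≠ 0)
    (hlam : lam = 2 * (∑ i, τ i * (J i)⁻¹ * q i * qm i) /
      (∑ i, τ i * ((J i)⁻¹)^2 * q i * q i))
    (heq : ∀ i, qp i = lam * (J i)⁻¹ * q i - qm i)
    (hm : ∑ i, τ i * qm i * qm i = 0)
    (h0 : ∑ i, τ i * q i * q i = 0) :
    (∑ i, τ i * q i * (J i * qp i))^2 = (∑ i, τ i * qm i * (J i * q i))^2 := by
  have key : ∀ i, τ i * q i * (J i * qp i) =
      lam * (τ i * q i * q i) - τ i * qm i * (J i * q i) := by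
    intro i
    rw [heq i]
    field_simp [hJ i]
  calc (∑ i, τ i * q i * (J i * qp i))^2
      = (∑ i, (lam * (τ i * q i * q i) - τ i * qm i * (J i * q i)))^2 := by
        simp_rw [key]
    _ = (lam * (∑ i, τ i * q i * q i) - ∑ i, τ i * qm i * (J i * q i))^2 := by
        rw [Finset.sum_sub_distrib, Finset.mul_sum]
    _ = (∑ i, τ i * qm i * (J i * q i))^2 := by rw [h0]; ring
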